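/- Let c : ℝ × ℝ → ℝ be a continuous function that is nondecreasing in each argument separately and satisfies lim_{a→−∞} c(a, b) = −∞ for every b ∈ ℝ and lim_{b→−∞} c(a, b) = −∞ for every a ∈ ℝ. Then there exist continuous nondecreasing functions g, h : ℝ → ℝ with lim_{a→−∞} g(a) = −∞ and lim_{b→−∞} h(b) = −∞ such that c(a, b) ≤ g(a) + h(b) for all a, b ∈ ℝ. -/

import Mathlib

open Metric Set Filter MeasureTheory
open scoped Pointwise RealInnerProductSpace Topology

variable {E : Type*} [NormedAddCommGroup E] [NormedSpace ℝ E]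

/-- Admissible solution domains: `[0,T]`, `[0,T)`, or `[0,∞)`. -/
def SolDomain (D : Set ℝ) : Prop :=
  (∃ T : ℝ, 0 ≤ T ∧ D = Set.Icc 0 T) ∨ (∃ T : ℝ, 0 < T ∧ D = Set.Ico 0 T) ∨ D = Set.Ici 0

/-- `φ` is a (locally absolutely continuous) solution of `ẋ ∈ F x` on `D`,
expressed in integral form: `φ t = φ 0 + ∫₀ᵗ v`, with `v t ∈ F (φ t)` a.e. on `D`. -/
def IsSolutionOn (F : E → Set E) (φ : ℝ → E) (D : Set ℝ) : Prop :=
  SolDomain D ∧ ∃ v : ℝ → E,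
    (∀ t ∈ D, MeasureTheory.IntegrableOn v (Set.Icc 0 t)) ∧
    (∀ t ∈ D, φ t = φ 0 + ∫ s in (0:ℝ)..t, v s) ∧
    (∀ᵐ t ∂(MeasureTheory.volume.restrict D), v t ∈ F (φ t))

/-- Safety: no solution starting in `Xo` ever reaches `Xu`. -/
def Safe (F : E → Set E) (Xo Xu : Set E) : Prop :=
  ∀ (φ : ℝ → E) (D : Set ℝ), IsSolutionOn F φ D → φ 0 ∈ Xo → ∀ t ∈ D, φ t ∉ Xu

/-- Forward invariance of `K`. -/
def ForwardInvariant (F : E → Set E) (K : Set E) : Prop :=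
  ∀ (φ : ℝ → E) (D : Set ℝ), IsSolutionOn F φ D → φ 0 ∈ K → ∀ t ∈ D, φ t ∈ K

/-- Image of a set under a set-valued map: `F(S) = ⋃_{y ∈ S} F(y)`. -/
def svImage (F : E → Set E) (S : Set E) : Set E := ⋃ y ∈ S, F y

/-- Right-hand side of the strongly perturbed system `Σ^s_ε`:
`conv (F (x + ε(x)𝔹)) + ε(x)𝔹`. -/
def strongPert (F : E → Set E) (ε : E → ℝ) (x : E) : Set E :=
  convexHull ℝ (svImage F (Metric.closedBall x (ε x))) + Metric.closedBall (0:E) (ε x)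

/-- Right-hand side of the (ordinary) perturbed system `Σ_ε`: `F x + ε(x)𝔹`. -/
def pert (F : E → Set E) (ε : E → ℝ) (x : E) : Set E :=
  F x + Metric.closedBall (0:E) (ε x)

def RobustlySafe (F : E → Set E) (Xo Xu : Set E) : Prop :=
  ∃ ε : E → ℝ, Continuous ε ∧ (∀ x, 0 < ε x) ∧ Safe (pert F ε) Xo Xu

def StronglyRobustlySafe (F : E → Set E) (Xo Xu : Set E) : Prop :=
  ∃ ε : E → ℝ, Continuous ε ∧ (∀ x, 0 < ε x) ∧ Safe (strongPert F ε) Xo Xu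

def UniformlyStronglyRobustlySafe (F : E → Set E) (Xo Xu : Set E) : Prop :=
  ∃ ε : ℝ, 0 < ε ∧ Safe (strongPert F (fun _ => ε)) Xo Xu

/-- Upper semicontinuity of a set-valued map. -/
def UpperSemicontinuousSV (F : E → Set E) : Prop :=
  ∀ x : E, ∀ U : Set E, IsOpen U → F x ⊆ U → ∀ᶠ y in nhds x, F y ⊆ U

/-- Lower semicontinuity of a set-valued map (sequential form). -/
def LowerSemicontinuousSV (F : E → Set E) : Prop :=
  ∀ x : E, ∀ y ∈ F x, ∀ u : ℕ → E, Filter.Tendsto u Filter.atTop (nhds x) →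
    ∃ v : ℕ → E, (∀ i, v i ∈ F (u i)) ∧ Filter.Tendsto v Filter.atTop (nhds y)

lemma max_tendsto_atBot' {f g : ℝ → ℝ} (hf : Filter.Tendsto f Filter.atBot Filter.atBot)
    (hg : Filter.Tendsto g Filter.atBot Filter.atBot) :
    Filter.Tendsto (fun x => max (f x) (g x)) Filter.atBot Filter.atBot := by
  rw [tendsto_atBot] at *
  intro K
  filter_upwards [hf K, hg K] with x h1 h2
  exact max_le h1 h2

/-- Auxiliary sup function: `S a = sup_{b ≥ 0} (c a b - (c b b)⁺ - b)`. -/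
lemma aux_S (c : ℝ → ℝ → ℝ)
    (hmono1 : ∀ b, Monotone (fun a => c a b))
    (hmono2 : ∀ a, Monotone (fun b => c a b))
    (hlim1 : ∀ b, Filter.Tendsto (fun a => c a b) Filter.atBot Filter.atBot) :
    ∃ S : ℝ → ℝ, Monotone S ∧ Filter.Tendsto S Filter.atBot Filter.atBot ∧
      ∀ a b, 0 ≤ b → c a b - max (c b b) 0 - b ≤ S a := by
  set T : ℝ → ℝ → ℝ := fun a b => c a b - max (c b b) 0 - b with hT
  have hne : ∀ a : ℝ, (T a '' Set.Ici 0).Nonempty := fun a =>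
    ⟨T a 0, Set.mem_image_of_mem _ (Set.self_mem_Ici)⟩
  have hbdd : ∀ a : ℝ, BddAbove (T a '' Set.Ici 0) := by
    intro a
    refine ⟨max (c a (max a 0)) 0, ?_⟩
    rintro x ⟨b, hb, rfl⟩
    simp only [Set.mem_Ici] at hb
    rcases le_total b (max a 0) with h | h
    · have h1 : c a b ≤ c a (max a 0) := hmono2 a h
      have h2 : (0:ℝ) ≤ max (c b b) 0 + b := by positivity
      have : T a b ≤ c a (max a 0) := by simp only [hT]; linarith
      exact this.trans (le_max_left _ _)
    · have ha : a ≤ b := le_trans (le_max_left a 0) h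
      have h1 : c a b ≤ c b b := hmono1 b ha
      have h2 : c b b ≤ max (c b b) 0 := le_max_left _ _
      have : T a b ≤ 0 := by simp only [hT]; linarith
      exact this.trans (le_max_right _ _)
  refine ⟨fun a => sSup (T a '' Set.Ici 0), ?_, ?_, ?_⟩
  · intro a1 a2 h12
    refine csSup_le (hne a1) ?_
    rintro x ⟨b, hb, rfl⟩
    have : T a1 b ≤ T a2 b := by
      have := hmono1 b h12
      simp only [hT]; dsimp at this; linarith
    exact this.trans (le_csSup (hbdd a2) (Set.mem_image_of_mem _ hb))
  · rw [tendsto_atBot]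
    intro K
    set N : ℝ := max (-K) 0 with hN
    have hNK : -N ≤ K := by
      have : -K ≤ N := le_max_left _ _
      linarith
    have hev : ∀ᶠ a in Filter.atBot, c a N ≤ K := (hlim1 N).eventually (eventually_le_atBot K)
    filter_upwards [hev, eventually_le_atBot N] with a haK haN
    refine csSup_le (hne a) ?_
    rintro x ⟨b, hb, rfl⟩
    simp only [Set.mem_Ici] at hb
    rcases le_total b N with h | h
    · have h1 : c a b ≤ c a N := hmono2 a h
      have h2 : (0:ℝ) ≤ max (c b b) 0 + b := by positivity
      simp only [hT]; linarith
    · have h1 : c a b ≤ c b b := hmono1 b (haN.trans h)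
      have h2 : c b b ≤ max (c b b) 0 := le_max_left _ _
      simp only [hT]; linarith
    -- done
  · intro a b hb
    exact le_csSup (hbdd a) (Set.mem_image_of_mem _ hb)

/-- Smoothing a monotone function to a continuous one dominating it. -/
lemma smooth_mono {G : ℝ → ℝ} (hG : Monotone G)
    (hlim : Filter.Tendsto G Filter.atBot Filter.atBot) :
    ∃ g : ℝ → ℝ, Continuous g ∧ Monotone g ∧ Filter.Tendsto g Filter.atBot Filter.atBot ∧
      ∀ a, G a ≤ g a := by
  have hint : ∀ a b : ℝ, IntervalIntegrable G MeasureTheory.volume a b := fun a b =>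
    hG.intervalIntegrable
  refine ⟨fun a => ∫ t in a..(a + 1), G t, ?_, ?_, ?_, ?_⟩
  · have h1 : Continuous fun x : ℝ => ∫ t in (0:ℝ)..x, G t :=
      intervalIntegral.continuous_primitive hint 0
    have : (fun a : ℝ => ∫ t in a..(a + 1), G t) =
        fun a : ℝ => (∫ t in (0:ℝ)..(a + 1), G t) - ∫ t in (0:ℝ)..a, G t := by
      funext a
      rw [eq_sub_iff_add_eq, add_comm,
        intervalIntegral.integral_add_adjacent_intervals (hint 0 a) (hint a _)]
    rw [this]
    exact ((h1.comp (continuous_id.add continuous_const)).sub h1)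
  · intro a1 a2 h12
    have key : (∫ t in a1..(a1 + 1), G t) ≤ ∫ t in a1..(a1 + 1), G (t + (a2 - a1)) := by
      refine intervalIntegral.integral_mono_on (by linarith) (hint _ _) ?_ ?_
      · exact (hG.comp (monotone_id.add_const (a2 - a1))).intervalIntegrable (μ := MeasureTheory.volume)
      · intro x _
        exact hG (by linarith)
    have heq : (∫ t in a1..(a1 + 1), G (t + (a2 - a1))) = ∫ t in a2..(a2 + 1), G t := by
      rw [intervalIntegral.integral_comp_add_right]
      norm_num
      ring_nf
    rw [heq] at key
    exact key
  · have hle : ∀ a : ℝ, (∫ t in a..(a + 1), G t) ≤ G (a + 1) := by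
      intro a
      have : (∫ t in a..(a + 1), G t) ≤ ∫ _ in a..(a + 1), G (a + 1) := by
        refine intervalIntegral.integral_mono_on (by linarith) (hint _ _)
          intervalIntegrable_const ?_
        intro x hx
        exact hG hx.2
      simpa using this
    refine tendsto_atBot_mono hle ?_
    exact hlim.comp (tendsto_atBot_add_const_right _ 1 tendsto_id)
  · intro a
    have : (∫ _ in a..(a + 1), G a) ≤ ∫ t in a..(a + 1), G t := by
      refine intervalIntegral.integral_mono_on (by linarith) intervalIntegrable_const
        (hint _ _) ?_
      intro x hx
      exact hG hx.1
    simpa using this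

/-- A continuous `c : ℝ² → ℝ`, nondecreasing in each argument and tending to
`-∞` as either argument tends to `-∞`, is dominated by a sum `g(a) + h(b)` with `g, h`
continuous, nondecreasing, and tending to `-∞` at `-∞`. -/
theorem stmt15 (c : ℝ → ℝ → ℝ)
    (hcont : Continuous (fun p : ℝ × ℝ => c p.1 p.2))
    (hmono1 : ∀ b, Monotone (fun a => c a b))
    (hmono2 : ∀ a, Monotone (fun b => c a b))
    (hlim1 : ∀ b, Filter.Tendsto (fun a => c a b) Filter.atBot Filter.atBot)
    (hlim2 : ∀ a, Filter.Tendsto (fun b => c a b) Filter.atBot Filter.atBot) :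
    ∃ g h : ℝ → ℝ, Continuous g ∧ Continuous h ∧ Monotone g ∧ Monotone h ∧
      Filter.Tendsto g Filter.atBot Filter.atBot ∧
      Filter.Tendsto h Filter.atBot Filter.atBot ∧
      ∀ a b : ℝ, c a b ≤ g a + h b := by
  clear hcont
  obtain ⟨S, hSmono, hSlim, hSle⟩ := aux_S c hmono1 hmono2 hlim1
  obtain ⟨S', hS'mono, hS'lim, hS'le⟩ :=
    aux_S (fun x y => c y x) (fun y => hmono2 y) (fun x => hmono1 x) (fun y => hlim2 y)
  set B : ℝ → ℝ := fun t => max (c t t) 0 with hB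
  have hBmono : Monotone B := by
    intro t1 t2 h
    exact max_le_max (le_trans (hmono1 t1 h) (hmono2 t2 h)) le_rfl
  have hBnonneg : ∀ t, 0 ≤ B t := fun t => le_max_right _ _
  set q1 : ℝ → ℝ := fun a => c (min a 0) 0 / 2 with hq1
  set q2 : ℝ → ℝ := fun b => c 0 (min b 0) / 2 with hq2
  set P : ℝ → ℝ := fun t => B (max t 0) + max t 0 + min t 0 with hP
  set G0 : ℝ → ℝ := fun a => max (max (S a) (q1 a)) (P a) with hG0
  set H0 : ℝ → ℝ := fun b => max (max (S' b) (q2 b)) (P b) with hH0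
  have hminmono : Monotone (fun t : ℝ => min t 0) := fun x y h => min_le_min h le_rfl
  have hmaxmono : Monotone (fun t : ℝ => max t 0) := fun x y h => max_le_max h le_rfl
  have hq1mono : Monotone q1 := fun x y h =>
    div_le_div_of_nonneg_right (hmono1 0 (hminmono h)) two_pos.le
  have hq2mono : Monotone q2 := fun x y h =>
    div_le_div_of_nonneg_right (hmono2 0 (hminmono h)) two_pos.le
  have hPmono : Monotone P := fun x y h => by
    have h1 := hBmono (hmaxmono h)
    have h2 := hmaxmono h
    have h3 := hminmono h
    simp only [hP]; dsimp at *; linarith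
  have hG0mono : Monotone G0 := ((hSmono.max hq1mono).max hPmono)
  have hH0mono : Monotone H0 := ((hS'mono.max hq2mono).max hPmono)
  have hminlim : Filter.Tendsto (fun t : ℝ => min t 0) Filter.atBot Filter.atBot :=
    tendsto_atBot_mono (fun t => min_le_left t 0) tendsto_id
  have hq1lim : Filter.Tendsto q1 Filter.atBot Filter.atBot :=
    Filter.Tendsto.atBot_div_const two_pos ((hlim1 0).comp hminlim)
  have hq2lim : Filter.Tendsto q2 Filter.atBot Filter.atBot :=
    Filter.Tendsto.atBot_div_const two_pos ((hlim2 0).comp hminlim)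
  have hPlim : Filter.Tendsto P Filter.atBot Filter.atBot := by
    refine tendsto_atBot_mono' Filter.atBot ?_
      (tendsto_atBot_add_const_left _ (B 0) tendsto_id)
    filter_upwards [eventually_le_atBot (0:ℝ)] with a ha
    have h1 : max a 0 = 0 := max_eq_right ha
    have h2 : min a 0 = a := min_eq_left ha
    simp only [hP, h1, h2, id_eq, add_zero]
    exact le_refl _
  have hG0lim : Filter.Tendsto G0 Filter.atBot Filter.atBot :=
    max_tendsto_atBot' (max_tendsto_atBot' hSlim hq1lim) hPlim
  have hH0lim : Filter.Tendsto H0 Filter.atBot Filter.atBot :=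
    max_tendsto_atBot' (max_tendsto_atBot' hS'lim hq2lim) hPlim
  have hmain : ∀ a b : ℝ, c a b ≤ G0 a + H0 b := by
    intro a b
    have hG0S : S a ≤ G0 a := le_trans (le_max_left _ _) (le_max_left _ _)
    have hG0q : q1 a ≤ G0 a := le_trans (le_max_right _ _) (le_max_left _ _)
    have hG0P : P a ≤ G0 a := le_max_right _ _
    have hH0S : S' b ≤ H0 b := le_trans (le_max_left _ _) (le_max_left _ _)
    have hH0q : q2 b ≤ H0 b := le_trans (le_max_right _ _) (le_max_left _ _)
    have hH0P : P b ≤ H0 b := le_max_right _ _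
    rcases le_or_gt 0 b with hb | hb
    · have h1 : c a b - max (c b b) 0 - b ≤ S a := hSle a b hb
      have h2 : P b = B b + b := by
        simp only [hP, max_eq_left hb, min_eq_right hb, add_zero]
      simp only [hB] at h2 ⊢
      linarith
    · rcases le_or_gt 0 a with ha | ha
      · have h1 : c a b - max (c a a) 0 - a ≤ S' b := hS'le b a ha
        have h2 : P a = B a + a := by
          simp only [hP, max_eq_left ha, min_eq_right ha, add_zero]
        simp only [hB] at h2 ⊢
        linarith
      · have h1 : c a b ≤ c a 0 := hmono2 a hb.le
        have h2 : c a b ≤ c 0 b := hmono1 b ha.le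
        have h3 : q1 a = c a 0 / 2 := by simp only [hq1, min_eq_left ha.le]
        have h4 : q2 b = c 0 b / 2 := by simp only [hq2, min_eq_left hb.le]
        linarith
  obtain ⟨g, hgc, hgm, hgl, hgle⟩ := smooth_mono hG0mono hG0lim
  obtain ⟨h, hhc, hhm, hhl, hhle⟩ := smooth_mono hH0mono hH0lim
  exact ⟨g, h, hgc, hhc, hgm, hhm, hgl, hhl, fun a b =>
    (hmain a b).trans (add_le_add (hgle a) (hhle b))⟩
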